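/- Let t̂, f̂, σ_t, σ_f be real numbers with 0 < σ_t < t̂ and 0 < σ_f < f̂. Set r₁ = (f̂ − σ_f)/(t̂ + σ_t) and r₂ = (f̂ + σ_f)/(t̂ − σ_t). Then the maximal uncertainty satisfies Δ = sup_{η ∈ (0,1)} (UB(η) − LB(η)) = (1 − √(r₁/r₂)) / (1 + √(r₁/r₂)). -/

import Mathlib

open Set

/-- Precision as a function of positive class prevalence `η`, TPR `t` and FPR `f`. -/
noncomputable def Prec (η t f : ℝ) : ℝ := η * t / (η * t + (1 - η) * f)

/-- Upper bound `UB(η)`: supremum of precision over the confidence intervals. -/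
noncomputable def UB (th σt fh σf η : ℝ) : ℝ :=
  sSup {p : ℝ | ∃ t ∈ Ioo (th - σt) (th + σt), ∃ f ∈ Ioo (fh - σf) (fh + σf), p = Prec η t f}

/-- Lower bound `LB(η)`: infimum of precision over the confidence intervals. -/
noncomputable def LB (th σt fh σf η : ℝ) : ℝ :=
  sInf {p : ℝ | ∃ t ∈ Ioo (th - σt) (th + σt), ∃ f ∈ Ioo (fh - σf) (fh + σf), p = Prec η t f}

/-- The maximal uncertainty `Δ = sup_{η ∈ (0,1)} (UB(η) - LB(η))`. -/
noncomputable def Delta (th σt fh σf : ℝ) : ℝ :=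
  sSup {d : ℝ | ∃ η ∈ Ioo (0:ℝ) 1, d = UB th σt fh σf η - LB th σt fh σf η}

section Aux

open Filter

lemma Prec_mono' {η t f t' f' : ℝ} (hη0 : 0 < η) (hη1 : η < 1)
    (ht : 0 < t) (htt : t ≤ t') (hf' : 0 < f') (hff : f' ≤ f) :
    Prec η t f ≤ Prec η t' f' := by
  unfold Prec
  have hf0 : 0 < f := lt_of_lt_of_le hf' hff
  have ht'0 : 0 < t' := lt_of_lt_of_le ht htt
  have h1 : 0 < η * t + (1 - η) * f := by nlinarith
  have h2 : 0 < η * t' + (1 - η) * f' := by nlinarith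
  rw [div_le_div_iff₀ h1 h2]
  nlinarith [mul_le_mul htt hff hf'.le ht'0.le, mul_pos hη0 (by linarith : (0:ℝ) < 1 - η)]

variable {th fh σt σf η : ℝ}

lemma UB_eq (hσt : 0 < σt) (hth : σt < th) (hσf : 0 < σf) (hfh : σf < fh)
    (hη0 : 0 < η) (hη1 : η < 1) :
    UB th σt fh σf η = Prec η (th + σt) (fh - σf) := by
  have htm : 0 < th - σt := by linarith
  have hfm : 0 < fh - σf := by linarith
  have hden : 0 < η * (th + σt) + (1 - η) * (fh - σf) := by nlinarith
  apply IsLUB.csSup_eq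
  · constructor
    · rintro p ⟨t, ⟨ht1, ht2⟩, f, ⟨hf1, hf2⟩, rfl⟩
      exact Prec_mono' hη0 hη1 (by linarith) ht2.le hfm hf1.le
    · intro w hw
      set g : ℝ → ℝ := fun ε => Prec η (th + σt - ε) (fh - σf + ε) with hg
      have hg0 : g 0 = Prec η (th + σt) (fh - σf) := by simp [hg]
      have hc : ContinuousAt g 0 := by
        apply ContinuousAt.div (by fun_prop) (by fun_prop)
        simpa using hden.ne'
      have htend : Tendsto g (nhdsWithin 0 (Ioi 0)) (nhds (Prec η (th + σt) (fh - σf))) := by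
        rw [← hg0]; exact hc.tendsto.mono_left nhdsWithin_le_nhds
      refine le_of_tendsto htend ?_
      filter_upwards [Ioo_mem_nhdsGT_of_mem
        (by constructor <;> [rfl; exact lt_min hσt hσf] : (0:ℝ) ∈ Ico 0 (min σt σf))] with ε hε
      have hε1 : 0 < ε := hε.1
      have hε2 : ε < σt := lt_of_lt_of_le hε.2 (min_le_left _ _)
      have hε3 : ε < σf := lt_of_lt_of_le hε.2 (min_le_right _ _)
      exact hw ⟨th + σt - ε, ⟨by linarith, by linarith⟩, fh - σf + ε,
        ⟨by linarith, by linarith⟩, rfl⟩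
  · exact ⟨Prec η th fh, th, ⟨by linarith, by linarith⟩, fh, ⟨by linarith, by linarith⟩, rfl⟩

lemma LB_eq (hσt : 0 < σt) (hth : σt < th) (hσf : 0 < σf) (hfh : σf < fh)
    (hη0 : 0 < η) (hη1 : η < 1) :
    LB th σt fh σf η = Prec η (th - σt) (fh + σf) := by
  have htm : 0 < th - σt := by linarith
  have hfm : 0 < fh - σf := by linarith
  have hden : 0 < η * (th - σt) + (1 - η) * (fh + σf) := by nlinarith
  apply IsGLB.csInf_eq
  · constructor
    · rintro p ⟨t, ⟨ht1, ht2⟩, f, ⟨hf1, hf2⟩, rfl⟩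
      exact Prec_mono' hη0 hη1 htm ht1.le (by linarith) hf2.le
    · intro w hw
      set g : ℝ → ℝ := fun ε => Prec η (th - σt + ε) (fh + σf - ε) with hg
      have hg0 : g 0 = Prec η (th - σt) (fh + σf) := by simp [hg]
      have hc : ContinuousAt g 0 := by
        apply ContinuousAt.div (by fun_prop) (by fun_prop)
        simpa using hden.ne'
      have htend : Tendsto g (nhdsWithin 0 (Ioi 0)) (nhds (Prec η (th - σt) (fh + σf))) := by
        rw [← hg0]; exact hc.tendsto.mono_left nhdsWithin_le_nhds
      refine ge_of_tendsto htend ?_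
      filter_upwards [Ioo_mem_nhdsGT_of_mem
        (by constructor <;> [rfl; exact lt_min hσt hσf] : (0:ℝ) ∈ Ico 0 (min σt σf))] with ε hε
      have hε1 : 0 < ε := hε.1
      have hε2 : ε < σt := lt_of_lt_of_le hε.2 (min_le_left _ _)
      have hε3 : ε < σf := lt_of_lt_of_le hε.2 (min_le_right _ _)
      exact hw ⟨th - σt + ε, ⟨by linarith, by linarith⟩, fh + σf - ε,
        ⟨by linarith, by linarith⟩, rfl⟩
  · exact ⟨Prec η th fh, th, ⟨by linarith, by linarith⟩, fh, ⟨by linarith, by linarith⟩, rfl⟩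

lemma key_ineq {η tp tm fp fm s : ℝ} (hη0 : 0 < η) (hη1 : η < 1)
    (htp : 0 < tp) (htm : 0 < tm) (hfp : 0 < fp) (hfm : 0 < fm)
    (hs0 : 0 < s) (hs1 : s < 1) (hrel : tm * fm = s ^ 2 * (tp * fp)) :
    Prec η tp fm - Prec η tm fp ≤ (1 - s) / (1 + s) := by
  have hD1 : 0 < η * tp + (1 - η) * fm := by nlinarith
  have hD2 : 0 < η * tm + (1 - η) * fp := by nlinarith
  have key : 2 * s * (η * (1 - η) * (tp * fp)) ≤ η ^ 2 * (tp * tm) + (1 - η) ^ 2 * (fm * fp) := by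
    rw [← mul_le_mul_iff_of_pos_right htm]
    have hint := mul_nonneg (sq_nonneg (η * tm - (1 - η) * s * fp)) htp.le
    have hrel' : (1 - η) ^ 2 * fp * (tm * fm) = (1 - η) ^ 2 * fp * (s ^ 2 * (tp * fp)) := by
      rw [hrel]
    nlinarith [hint, hrel']
  unfold Prec
  rw [div_sub_div _ _ hD1.ne' hD2.ne',
    div_le_div_iff₀ (mul_pos hD1 hD2) (by linarith : (0:ℝ) < 1 + s)]
  have P1 : 0 ≤ (1 - s) *
      ((η ^ 2 * (tp * tm) + (1 - η) ^ 2 * (fm * fp)) - 2 * s * (η * (1 - η) * (tp * fp))) :=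
    mul_nonneg (by linarith) (by linarith)
  have P2 : η * (1 - η) * (1 - s) * (tm * fm) = η * (1 - η) * (1 - s) * (s ^ 2 * (tp * fp)) := by
    rw [hrel]
  have P3 : η * (1 - η) * (1 + s) * (tm * fm) = η * (1 - η) * (1 + s) * (s ^ 2 * (tp * fp)) := by
    rw [hrel]
  nlinarith [P1, P2, P3]

lemma eq_case {tp tm fp fm s : ℝ}
    (htp : 0 < tp) (htm : 0 < tm) (hfp : 0 < fp) (hfm : 0 < fm)
    (hs0 : 0 < s) (hs1 : s < 1) (hrel : tm * fm = s ^ 2 * (tp * fp)) :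
    Prec (s * fp / (s * fp + tm)) tp fm - Prec (s * fp / (s * fp + tm)) tm fp
      = (1 - s) / (1 + s) := by
  have hQ : 0 < s * fp + tm := by positivity
  set η := s * fp / (s * fp + tm) with hη
  have hη0 : 0 < η := by positivity
  have hη1 : η < 1 := by rw [hη, div_lt_one hQ]; linarith
  have h1 : Prec η tp fm = 1 / (1 + s) := by
    unfold Prec
    have hden : (0:ℝ) < η * tp + (1 - η) * fm := by nlinarith
    rw [div_eq_div_iff hden.ne' (by linarith : (1:ℝ) + s ≠ 0), hη]
    field_simp
    linear_combination -hrel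
  have h2 : Prec η tm fp = s / (1 + s) := by
    unfold Prec
    have hden : (0:ℝ) < η * tm + (1 - η) * fp := by nlinarith
    rw [div_eq_div_iff hden.ne' (by linarith : (1:ℝ) + s ≠ 0), hη]
    field_simp
    ring
  rw [h1, h2, div_sub_div_same]

end Aux

/-- closed form of the maximal uncertainty `Δ`. -/
theorem delta_closed_form (th fh σt σf : ℝ)
    (hσt : 0 < σt) (hth : σt < th) (hσf : 0 < σf) (hfh : σf < fh) :
    Delta th σt fh σf =
      (1 - Real.sqrt (((fh - σf) / (th + σt)) / ((fh + σf) / (th - σt)))) /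
      (1 + Real.sqrt (((fh - σf) / (th + σt)) / ((fh + σf) / (th - σt)))) := by
  have htm : 0 < th - σt := by linarith
  have hfm : 0 < fh - σf := by linarith
  have htp : 0 < th + σt := by linarith
  have hfp : 0 < fh + σf := by linarith
  set r : ℝ := ((fh - σf) / (th + σt)) / ((fh + σf) / (th - σt)) with hr_def
  have hr : 0 < r := by positivity
  set s : ℝ := Real.sqrt r with hs_def
  have hs0 : 0 < s := Real.sqrt_pos.2 hr
  have hs2 : s ^ 2 = r := Real.sq_sqrt hr.le
  have hr1 : r < 1 := by
    rw [hr_def, div_lt_one (by positivity), div_lt_div_iff₀ htp htm]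
    nlinarith
  have hs1 : s < 1 := by nlinarith [hs2]
  have hrel : (th - σt) * (fh - σf) = s ^ 2 * ((th + σt) * (fh + σf)) := by
    rw [hs2, hr_def]
    field_simp
  have hη0' : 0 < s * (fh + σf) / (s * (fh + σf) + (th - σt)) := by positivity
  have hη1' : s * (fh + σf) / (s * (fh + σf) + (th - σt)) < 1 := by
    rw [div_lt_one (by positivity)]; linarith
  unfold Delta
  apply IsGreatest.csSup_eq
  constructor
  · exact ⟨s * (fh + σf) / (s * (fh + σf) + (th - σt)), ⟨hη0', hη1'⟩, by
      rw [UB_eq hσt hth hσf hfh hη0' hη1', LB_eq hσt hth hσf hfh hη0' hη1']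
      exact (eq_case htp htm hfp hfm hs0 hs1 hrel).symm⟩
  · rintro d ⟨η, ⟨h0, h1⟩, rfl⟩
    rw [UB_eq hσt hth hσf hfh h0 h1, LB_eq hσt hth hσf hfh h0 h1]
    exact key_ineq h0 h1 htp htm hfp hfm hs0 hs1 hrel
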